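/- Let n = 2 and μ = a_1 δ_{y_1} + a_2 δ_{y_2} with distinct y_1, y_2 ∈ I(2, Ω) and nonzero a_1, a_2 ∈ ℂ, and let Y(ω) = F[μ](ω) + W(ω), ω ∈ [−Ω, Ω], with |W(ω)| < σ for all ω ∈ [−Ω, Ω]. Assume σ/m_min ≤ 1/4. If |y_1 − y_2| ≥ (2/Ω) · arcsin(2·(σ/m_min)^{1/2}), then there does not exist any σ-admissible measure of Y with only one support point; that is, there exist no ŷ ∈ ℝ and â ∈ ℂ such that |â e^{i ŷ ω} − Y(ω)| < σ for all ω ∈ [−Ω, Ω]. -/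

import Mathlib

noncomputable def Fsum (c0 c1 c2 : ℂ) (t0 t1 t2 : ℝ) (x : ℝ) : ℂ :=
    c0 * Complex.exp (Complex.I * (t0:ℂ) * (x:ℂ))
  + c1 * Complex.exp (Complex.I * (t1:ℂ) * (x:ℂ))
  + c2 * Complex.exp (Complex.I * (t2:ℂ) * (x:ℂ))

lemma exp_shift (t ω h : ℝ) :
    Complex.exp (Complex.I * (t:ℂ) * ((ω + h : ℝ):ℂ))
      = Complex.exp (Complex.I * t * ω) * Complex.exp (Complex.I * t * h) := by
  rw [← Complex.exp_add]
  congr 1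
  push_cast
  ring

lemma key_identity (c0 c1 c2 : ℂ) (t0 t1 t2 ω h : ℝ) :
    Fsum c0 c1 c2 t0 t1 t2 (ω + h + h)
      - (Complex.exp (Complex.I * t0 * h) + Complex.exp (Complex.I * t2 * h))
          * Fsum c0 c1 c2 t0 t1 t2 (ω + h)
      + Complex.exp (Complex.I * t0 * h) * Complex.exp (Complex.I * t2 * h)
          * Fsum c0 c1 c2 t0 t1 t2 ω
    = c1 * (Complex.exp (Complex.I * t1 * h) - Complex.exp (Complex.I * t0 * h))
        * (Complex.exp (Complex.I * t1 * h) - Complex.exp (Complex.I * t2 * h))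
        * Complex.exp (Complex.I * t1 * ω) := by
  unfold Fsum
  rw [exp_shift t0 (ω+h) h, exp_shift t1 (ω+h) h, exp_shift t2 (ω+h) h,
    exp_shift t0 ω h, exp_shift t1 ω h, exp_shift t2 ω h]
  ring

lemma abs_exp_I_mul (t x : ℝ) : ‖Complex.exp (Complex.I * t * x)‖ = 1 := by
  have : Complex.I * (t:ℂ) * (x:ℂ) = ((t*x : ℝ):ℂ) * Complex.I := by push_cast; ring
  rw [this, Complex.norm_exp_ofReal_mul_I]

lemma abs_exp_sub_exp (a b : ℝ) :
    ‖Complex.exp (Complex.I * a) - Complex.exp (Complex.I * b)‖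
      = 2 * |Real.sin ((a - b)/2)| := by
  have h1 : Complex.exp (Complex.I * a) - Complex.exp (Complex.I * b)
      = Complex.exp (Complex.I * b) * (Complex.exp (Complex.I * ((a - b : ℝ):ℂ)) - 1) := by
    rw [mul_sub, ← Complex.exp_add, mul_one]
    congr 2
    push_cast; ring
  rw [h1, norm_mul]
  have h2 : ‖Complex.exp (Complex.I * (b:ℂ))‖ = 1 := by
    rw [show Complex.I * (b:ℂ) = ((b:ℝ):ℂ) * Complex.I by ring, Complex.norm_exp_ofReal_mul_I]
  rw [h2, one_mul]
  set c := a - b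
  have h3 : Complex.exp (Complex.I * (c:ℂ)) - 1
      = ((Real.cos c - 1 : ℝ):ℂ) + ((Real.sin c : ℝ):ℂ) * Complex.I := by
    rw [show Complex.I * (c:ℂ) = ((c:ℝ):ℂ) * Complex.I by ring, Complex.exp_mul_I]
    push_cast
    ring
  rw [h3, Real.abs_sin_half]
  rw [Complex.norm_def, Complex.normSq_apply]
  simp only [Complex.add_re, Complex.add_im, Complex.ofReal_re, Complex.ofReal_im,
    Complex.mul_re, Complex.mul_im, Complex.I_re, Complex.I_im]
  have hsc : Real.sin c ^ 2 + Real.cos c ^ 2 = 1 := Real.sin_sq_add_cos_sq c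
  have e1 : (Real.cos c - 1 + (Real.sin c * 0 - 0 * 1)) * (Real.cos c - 1 + (Real.sin c * 0 - 0 * 1))
      + (0 + (Real.sin c * 1 + 0 * 0)) * (0 + (Real.sin c * 1 + 0 * 0))
      = 4 * ((1 - Real.cos c) / 2) := by nlinarith [hsc]
  rw [e1, show (4:ℝ) * ((1 - Real.cos c)/2) = 2^2 * ((1 - Real.cos c)/2) by norm_num,
    Real.sqrt_mul (by norm_num : (0:ℝ) ≤ 2^2), Real.sqrt_sq (by norm_num : (0:ℝ) ≤ 2)]

lemma coeff_bound (σ Ω : ℝ) (hΩ : 0 < Ω) (c0 c1 c2 : ℂ) (t0 t1 t2 h : ℝ)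
    (hh0 : 0 ≤ h) (hhΩ : h ≤ Ω)
    (hg : ∀ ω ∈ Set.Icc (-Ω) Ω, ‖Fsum c0 c1 c2 t0 t1 t2 ω‖ < 2*σ) :
    ‖c1‖ * (2*|Real.sin ((t1*h - t0*h)/2)|) * (2*|Real.sin ((t1*h - t2*h)/2)|)
      < 8*σ := by
  have m0 : (-Ω) ∈ Set.Icc (-Ω) Ω := ⟨le_refl _, by linarith⟩
  have m1 : (-Ω + h) ∈ Set.Icc (-Ω) Ω := ⟨by linarith, by linarith⟩
  have m2 : (-Ω + h + h) ∈ Set.Icc (-Ω) Ω := ⟨by linarith, by linarith⟩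
  have id := key_identity c0 c1 c2 t0 t1 t2 (-Ω) h
  have habs : ‖c1 * (Complex.exp (Complex.I * t1 * h) - Complex.exp (Complex.I * t0 * h))
        * (Complex.exp (Complex.I * t1 * h) - Complex.exp (Complex.I * t2 * h))
        * Complex.exp (Complex.I * t1 * (-Ω:ℝ))‖ < 8*σ := by
    rw [← id]
    have b2 := hg _ m2
    have b1 := hg _ m1
    have b0 := hg _ m0
    have e0 : ‖Complex.exp (Complex.I * (t0:ℂ) * (h:ℂ))‖ = 1 := abs_exp_I_mul t0 h
    have e2 : ‖Complex.exp (Complex.I * (t2:ℂ) * (h:ℂ))‖ = 1 := abs_exp_I_mul t2 h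
    calc ‖_‖ ≤ ‖Fsum c0 c1 c2 t0 t1 t2 (-Ω + h + h)
          - (Complex.exp (Complex.I * t0 * h) + Complex.exp (Complex.I * t2 * h))
            * Fsum c0 c1 c2 t0 t1 t2 (-Ω + h)‖
        + ‖Complex.exp (Complex.I * t0 * h) * Complex.exp (Complex.I * t2 * h)
            * Fsum c0 c1 c2 t0 t1 t2 (-Ω)‖ := norm_add_le _ _
      _ ≤ ‖Fsum c0 c1 c2 t0 t1 t2 (-Ω + h + h)‖
          + ‖(Complex.exp (Complex.I * t0 * h) + Complex.exp (Complex.I * t2 * h))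
            * Fsum c0 c1 c2 t0 t1 t2 (-Ω + h)‖
          + ‖Complex.exp (Complex.I * t0 * h) * Complex.exp (Complex.I * t2 * h)
            * Fsum c0 c1 c2 t0 t1 t2 (-Ω)‖ := by
            gcongr
            exact norm_sub_le (Fsum c0 c1 c2 t0 t1 t2 (-Ω + h + h))
              ((Complex.exp (Complex.I * t0 * h) + Complex.exp (Complex.I * t2 * h))
                * Fsum c0 c1 c2 t0 t1 t2 (-Ω + h))
      _ < 8*σ := by
            rw [norm_mul, norm_mul, norm_mul, e0, e2, one_mul, one_mul]
            have hsum : ‖Complex.exp (Complex.I * t0 * h) + Complex.exp (Complex.I * t2 * h)‖ ≤ 2 := by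
              calc ‖_‖ ≤ _ + _ := norm_add_le _ _
                _ = 2 := by rw [e0, e2]; norm_num
            nlinarith [norm_nonneg (Fsum c0 c1 c2 t0 t1 t2 (-Ω + h)), hsum, b0, b1, b2]
  rw [norm_mul, norm_mul, norm_mul, abs_exp_I_mul t1 (-Ω), mul_one] at habs
  have r1 : ‖Complex.exp (Complex.I * (t1:ℂ) * (h:ℂ)) - Complex.exp (Complex.I * (t0:ℂ) * (h:ℂ))‖
      = 2*|Real.sin ((t1*h - t0*h)/2)| := by
    rw [show Complex.I * (t1:ℂ) * (h:ℂ) = Complex.I * (((t1*h:ℝ)):ℂ) by push_cast; ring,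
      show Complex.I * (t0:ℂ) * (h:ℂ) = Complex.I * (((t0*h:ℝ)):ℂ) by push_cast; ring,
      abs_exp_sub_exp]
  have r2 : ‖Complex.exp (Complex.I * (t1:ℂ) * (h:ℂ)) - Complex.exp (Complex.I * (t2:ℂ) * (h:ℂ))‖
      = 2*|Real.sin ((t1*h - t2*h)/2)| := by
    rw [show Complex.I * (t1:ℂ) * (h:ℂ) = Complex.I * (((t1*h:ℝ)):ℂ) by push_cast; ring,
      show Complex.I * (t2:ℂ) * (h:ℂ) = Complex.I * (((t2*h:ℝ)):ℂ) by push_cast; ring,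
      abs_exp_sub_exp]
  rw [r1, r2] at habs
  exact habs
set_option maxHeartbeats 1000000 in
/-- **Stability of number detection, case `n = 2` (Theorem 3.1).**
Let `μ = a₁ δ_{y₁} + a₂ δ_{y₂}` with distinct `y₁, y₂ ∈ I(2,Ω)` and nonzero amplitudes,
`Y(ω) = F[μ](ω) + W(ω)` on `[−Ω,Ω]` with `|W(ω)| < σ`, and assume `σ/m_min ≤ 1/4`.
If `|y₁ − y₂| ≥ (2/Ω) arcsin(2 (σ/m_min)^{1/2})`, then there is no σ-admissible measure
of `Y` with only one support point. -/
theorem number_detection_stability_two_points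
    (Ω σ : ℝ) (hΩ : 0 < Ω) (hσ : 0 < σ)
    (y₁ y₂ : ℝ) (hy : y₁ ≠ y₂)
    (a₁ a₂ : ℂ) (ha₁ : a₁ ≠ 0) (ha₂ : a₂ ≠ 0)
    (hloc₁ : y₁ ∈ Set.Ioo (-(Real.pi / (2 * Ω))) (Real.pi / (2 * Ω)))
    (hloc₂ : y₂ ∈ Set.Ioo (-(Real.pi / (2 * Ω))) (Real.pi / (2 * Ω)))
    (mmin : ℝ) (hmmin : mmin = min (‖a₁‖) (‖a₂‖))
    (hratio : σ / mmin ≤ 1 / 4)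
    (W : ℝ → ℂ) (hW : ∀ ω ∈ Set.Icc (-Ω) Ω, ‖W ω‖ < σ)
    (hsep : 2 / Ω * Real.arcsin (2 * Real.sqrt (σ / mmin)) ≤ |y₁ - y₂|) :
    ¬ ∃ (yh : ℝ) (ah : ℂ), ∀ ω ∈ Set.Icc (-Ω) Ω,
        ‖ah * Complex.exp (Complex.I * (yh : ℂ) * (ω : ℂ))
            - (a₁ * Complex.exp (Complex.I * (y₁ : ℂ) * (ω : ℂ))
              + a₂ * Complex.exp (Complex.I * (y₂ : ℂ) * (ω : ℂ)) + W ω)‖ < σ := by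
  rintro ⟨yh, ah, hadm⟩
  have hm : 0 < mmin := by
    rw [hmmin]; exact lt_min (norm_pos_iff.mpr ha₁) (norm_pos_iff.mpr ha₂)
  have hm₁ : mmin ≤ ‖a₁‖ := hmmin ▸ min_le_left _ _
  have hm₂ : mmin ≤ ‖a₂‖ := hmmin ▸ min_le_right _ _
  set r : ℝ := σ / mmin with hr
  have hr0 : 0 < r := div_pos hσ hm
  set s : ℝ := 2 * Real.sqrt r with hs
  have hsq : s * s = 4 * r := by
    rw [hs]; have := Real.sq_sqrt hr0.le; nlinarith [this]
  have hs0 : 0 < s := by positivity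
  have hs1 : s ≤ 1 := by
    have h1 : Real.sqrt r ≤ Real.sqrt (1/4) := Real.sqrt_le_sqrt hratio
    rw [show (1:ℝ)/4 = (1/2)^2 by norm_num, Real.sqrt_sq (by norm_num : (0:ℝ) ≤ 1/2)] at h1
    rw [hs]; linarith
  set θ := Real.arcsin s with hθ
  have hθ0 : 0 < θ := Real.arcsin_pos.mpr hs0
  have hsinθ : Real.sin θ = s := Real.sin_arcsin (by linarith) hs1
  have hD0 : 0 < |y₁ - y₂| := abs_pos.mpr (sub_ne_zero.mpr hy)
  set h := 2 * θ / |y₁ - y₂| with hh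
  have hh0 : 0 ≤ h := by positivity
  have hsep' : 2 * θ ≤ Ω * |y₁ - y₂| := by
    rw [div_mul_eq_mul_div, div_le_iff₀ hΩ] at hsep
    linarith
  have hhΩ : h ≤ Ω := by
    rw [hh, div_le_iff₀ hD0]; linarith
  -- the measurement-residual function
  have hg : ∀ ω ∈ Set.Icc (-Ω) Ω,
      ‖Fsum ah (-a₁) (-a₂) yh y₁ y₂ ω‖ < 2*σ := by
    intro ω hω
    have h1 := hadm ω hω
    have h2 := hW ω hω
    have e : Fsum ah (-a₁) (-a₂) yh y₁ y₂ ω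
        = (ah * Complex.exp (Complex.I * yh * ω)
            - (a₁ * Complex.exp (Complex.I * y₁ * ω)
              + a₂ * Complex.exp (Complex.I * y₂ * ω) + W ω)) + W ω := by
      unfold Fsum; ring
    rw [e]
    calc ‖_‖ ≤ _ + ‖W ω‖ := norm_add_le _ _
      _ < σ + σ := add_lt_add h1 h2
      _ = 2*σ := by ring
  have hg' : ∀ ω ∈ Set.Icc (-Ω) Ω,
      ‖Fsum ah (-a₂) (-a₁) yh y₂ y₁ ω‖ < 2*σ := by
    intro ω hω
    have e : Fsum ah (-a₂) (-a₁) yh y₂ y₁ ω = Fsum ah (-a₁) (-a₂) yh y₁ y₂ ω := by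
      unfold Fsum; ring
    rw [e]; exact hg ω hω
  have hb₁ := coeff_bound σ Ω hΩ ah (-a₁) (-a₂) yh y₁ y₂ h hh0 hhΩ hg
  have hb₂ := coeff_bound σ Ω hΩ ah (-a₂) (-a₁) yh y₂ y₁ h hh0 hhΩ hg'
  rw [norm_neg] at hb₁ hb₂
  -- the separation sine equals s exactly at step h
  have hne : y₁ - y₂ ≠ 0 := sub_ne_zero.mpr hy
  have hsinD : |Real.sin ((y₁*h - y₂*h)/2)| = s := by
    have harg : (y₁*h - y₂*h)/2 = (y₁ - y₂) / |y₁ - y₂| * θ := by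
      rw [hh]; field_simp
    rcases abs_cases (y₁ - y₂) with ⟨he, _⟩ | ⟨he, _⟩
    · have e1 : (y₁ - y₂)/|y₁ - y₂| = 1 := by rw [he]; exact div_self hne
      rw [harg, e1, one_mul, hsinθ, abs_of_pos hs0]
    · have e1 : (y₁ - y₂)/|y₁ - y₂| = -1 := by
        rw [he, div_neg, div_self hne]
      rw [harg, e1, neg_one_mul, Real.sin_neg, hsinθ, abs_neg, abs_of_pos hs0]
  rw [hsinD] at hb₁
  rw [show (y₂*h - y₁*h)/2 = -((y₁*h - y₂*h)/2) by ring, Real.sin_neg, abs_neg, hsinD] at hb₂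
  set A := |Real.sin ((y₁*h - yh*h)/2)| with hA'
  set B := |Real.sin ((y₂*h - yh*h)/2)| with hB'
  have hsm : mmin * (s*s) = 4*σ := by
    rw [hsq, hr]; field_simp
  have hA : A < s/2 := by
    nlinarith [hb₁, mul_le_mul_of_nonneg_right hm₁ (by positivity : (0:ℝ) ≤ (2*A)*(2*s)),
      mul_pos hm hs0, abs_nonneg (Real.sin ((y₁*h - yh*h)/2))]
  have hB : B < s/2 := by
    nlinarith [hb₂, mul_le_mul_of_nonneg_right hm₂ (by positivity : (0:ℝ) ≤ (2*B)*(2*s)),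
      mul_pos hm hs0, abs_nonneg (Real.sin ((y₂*h - yh*h)/2))]
  have hfin : s < s := by
    calc s = |Real.sin ((y₁*h - y₂*h)/2)| := hsinD.symm
      _ = |Real.sin ((y₁*h - yh*h)/2 - (y₂*h - yh*h)/2)| := by
          rw [show (y₁*h - y₂*h)/2 = (y₁*h - yh*h)/2 - (y₂*h - yh*h)/2 from by ring]
      _ ≤ A + B := by
          rw [Real.sin_sub]
          calc |Real.sin ((y₁*h - yh*h)/2) * Real.cos ((y₂*h - yh*h)/2)
                - Real.cos ((y₁*h - yh*h)/2) * Real.sin ((y₂*h - yh*h)/2)|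
              ≤ |Real.sin ((y₁*h - yh*h)/2) * Real.cos ((y₂*h - yh*h)/2)|
                + |Real.cos ((y₁*h - yh*h)/2) * Real.sin ((y₂*h - yh*h)/2)| := by
                  rw [sub_eq_add_neg]
                  exact (abs_add_le _ _).trans_eq (by rw [abs_neg])
            _ = A * |Real.cos ((y₂*h - yh*h)/2)| + |Real.cos ((y₁*h - yh*h)/2)| * B := by
                  rw [abs_mul, abs_mul]
            _ ≤ A * 1 + 1 * B := by
                  gcongr
                  · exact Real.abs_cos_le_one _
                  · exact Real.abs_cos_le_one _
            _ = A + B := by ring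
      _ < s/2 + s/2 := add_lt_add hA hB
      _ = s := by ring
  exact lt_irrefl s hfin
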